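/- Every call sequence of length at least n⁴ contains an epistemically redundant call: there is a call c occurring at two positions, written σ = σ₁.c.σ₂.c.σ₃, such that σ₁.c(root) = σ₁.c.σ₂.c(root). -/

import Mathlib

/-- A call is an ordered pair of distinct agents (caller, callee). -/
def Call (n : ℕ) : Type := {p : Fin n × Fin n // p.1 ≠ p.2}

namespace Gossip

variable {n : ℕ}

/-- The caller of a call. -/
def caller (c : Call n) : Fin n := c.1.1

/-- The callee of a call. -/
def callee (c : Call n) : Fin n := c.1.2

/-- Agent `a` is involved in call `c`. -/
def involves (c : Call n) (a : Fin n) : Prop := a = caller c ∨ a = callee c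

/-- A gossip situation assigns to each agent the set of secrets it is familiar with;
secrets are identified with the agents holding them. -/
def Situation (n : ℕ) := Fin n → Finset (Fin n)

/-- The initial gossip situation: every agent only holds its own secret. -/
def root : Situation n := fun a => {a}

/-- The effect of a call on a gossip situation: caller and callee share their secrets. -/
def applyCall (c : Call n) (s : Situation n) : Situation n :=
  fun x => if x = caller c ∨ x = callee c then s (caller c) ∪ s (callee c) else s x

/-- The effect of a call sequence on a gossip situation. -/
def applySeq (σ : List (Call n)) (s : Situation n) : Situation n :=
  σ.foldl (fun t c => applyCall c t) s

end Gossip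

open Gossip

namespace GossipAux

variable {n : ℕ}

instance : DecidableEq (Call n) := by unfold Call; infer_instance
instance : Fintype (Call n) := by unfold Call; infer_instance

lemma card_call_lt (hn0 : 0 < n) : Fintype.card (Call n) < n ^ 2 := by
  have h : Fintype.card (Call n) < Fintype.card (Fin n × Fin n) := by
    unfold Call
    exact Fintype.card_subtype_lt (x := ((⟨0, hn0⟩ : Fin n), (⟨0, hn0⟩ : Fin n))) (by simp)
  simpa [Fintype.card_prod, sq] using h

lemma applySeq_append (l₁ l₂ : List (Call n)) (s : Situation n) :
    applySeq (l₁ ++ l₂) s = applySeq l₂ (applySeq l₁ s) :=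
  List.foldl_append

lemma subset_applyCall (c : Call n) (s : Situation n) (a : Fin n) :
    s a ⊆ applyCall c s a := by
  unfold applyCall
  split
  · rename_i h
    rcases h with h | h <;> subst h
    · exact Finset.subset_union_left
    · exact Finset.subset_union_right
  · exact subset_rfl

/-- Situation after the first `i` calls. -/
def pre (σ : List (Call n)) (i : ℕ) : Situation n := applySeq (σ.take i) root

lemma pre_step (σ : List (Call n)) (j : ℕ) (a : Fin n) :
    pre σ j a ⊆ pre σ (j + 1) a := by
  unfold pre
  rw [List.take_succ, applySeq_append]
  cases h : σ[j]? with
  | none => simp [applySeq]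
  | some c =>
    simpa [applySeq] using subset_applyCall c (applySeq (σ.take j) root) a

lemma pre_mono (σ : List (Call n)) {i j : ℕ} (h : i ≤ j) (a : Fin n) :
    pre σ i a ⊆ pre σ j a := by
  induction j with
  | zero => simp_all
  | succ j ih =>
    rcases Nat.of_le_succ h with h' | h'
    · exact (ih h').trans (pre_step σ j a)
    · subst h'; exact subset_rfl

/-- Total weight of the situation after `i` calls. -/
def wt (σ : List (Call n)) (i : ℕ) : ℕ := ∑ a, (pre σ i a).card

lemma wt_zero (σ : List (Call n)) : wt σ 0 = n := by
  simp [wt, pre, applySeq, root]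

lemma wt_mono (σ : List (Call n)) {i j : ℕ} (h : i ≤ j) : wt σ i ≤ wt σ j :=
  Finset.sum_le_sum fun a _ => Finset.card_le_card (pre_mono σ h a)

lemma wt_mem (σ : List (Call n)) (i : ℕ) : wt σ i ∈ Finset.Icc n (n ^ 2) := by
  rw [Finset.mem_Icc]
  constructor
  · have := wt_mono σ (Nat.zero_le i)
    rwa [wt_zero] at this
  · calc wt σ i ≤ ∑ _a : Fin n, n :=
          Finset.sum_le_sum fun a _ => by
            simpa using Finset.card_le_univ (pre σ i a)
    _ = n ^ 2 := by simp [sq]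

lemma pre_eq_of_wt_eq (σ : List (Call n)) {i j : ℕ} (hij : i ≤ j)
    (h : wt σ i = wt σ j) : pre σ i = pre σ j := by
  funext a
  have hsub : ∀ b : Fin n, pre σ i b ⊆ pre σ j b := fun b => pre_mono σ hij b
  have hcard := (Finset.sum_eq_sum_iff_of_le
    (fun b _ => Finset.card_le_card (hsub b))).mp h
  exact Finset.eq_of_subset_of_card_le (hsub a) (hcard a (Finset.mem_univ a)).ge

end GossipAux

open GossipAux

/-- every call sequence of length ≥ n⁴ contains an epistemically
redundant call. -/
theorem epistemically_redundant_call {n : ℕ} (hn : 3 ≤ n) (σ : List (Call n))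
    (hlen : n ^ 4 ≤ σ.length) :
    ∃ (σ₁ σ₂ σ₃ : List (Call n)) (c : Call n),
      σ = σ₁ ++ [c] ++ σ₂ ++ [c] ++ σ₃ ∧
      applySeq (σ₁ ++ [c]) root = applySeq (σ₁ ++ [c] ++ σ₂ ++ [c]) root := by
  classical
  have hn0 : 0 < n := by omega
  have hn1 : 1 < n := by omega
  -- a default call, to state the pigeonhole map without dependent indices
  have hne : (⟨0, hn0⟩ : Fin n) ≠ ⟨1, hn1⟩ := by
    intro h; simpa using congrArg Fin.val h
  set d : Call n := ⟨(⟨0, hn0⟩, ⟨1, hn1⟩), hne⟩ with hd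
  set F : ℕ → Call n × ℕ := fun p => (σ.getD p d, wt σ (p + 1)) with hF
  -- pigeonhole
  have hcardlt : ((Finset.univ : Finset (Call n)) ×ˢ Finset.Icc n (n ^ 2)).card
      < (Finset.range (n ^ 4)).card := by
    rw [Finset.card_product, Finset.card_range, Finset.card_univ, Nat.card_Icc]
    have h1 : Fintype.card (Call n) < n ^ 2 := card_call_lt hn0
    have h2 : n ^ 2 + 1 - n ≤ n ^ 2 := by
      have := Nat.add_le_add_left (show 1 ≤ n by omega) (n ^ 2)
      omega
    have h0 : 0 < n ^ 2 := by positivity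
    calc Fintype.card (Call n) * (n ^ 2 + 1 - n)
        ≤ Fintype.card (Call n) * n ^ 2 := Nat.mul_le_mul_left _ h2
      _ < n ^ 2 * n ^ 2 := by nlinarith
      _ = n ^ 4 := by ring
  have hmaps : ∀ p ∈ Finset.range (n ^ 4),
      F p ∈ (Finset.univ : Finset (Call n)) ×ˢ Finset.Icc n (n ^ 2) := by
    intro p _
    rw [Finset.mem_product]
    exact ⟨Finset.mem_univ _, wt_mem σ (p + 1)⟩
  obtain ⟨p, hp, q, hq, hpq, hFpq⟩ :=
    Finset.exists_ne_map_eq_of_card_lt_of_maps_to hcardlt hmaps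
  rw [Finset.mem_range] at hp hq
  -- reduce to the ordered case
  suffices key : ∀ p q : ℕ, p < q → q < n ^ 4 → F p = F q →
      ∃ (σ₁ σ₂ σ₃ : List (Call n)) (c : Call n),
        σ = σ₁ ++ [c] ++ σ₂ ++ [c] ++ σ₃ ∧
        applySeq (σ₁ ++ [c]) root = applySeq (σ₁ ++ [c] ++ σ₂ ++ [c]) root by
    rcases Nat.lt_or_gt_of_ne hpq with h | h
    · exact key p q h hq hFpq
    · exact key q p h hp hFpq.symm
  clear hp hq hpq hFpq p q
  intro p q hpq hq hFpq
  have hp : p < n ^ 4 := hpq.trans hq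
  have hpl : p < σ.length := lt_of_lt_of_le hp hlen
  have hql : q < σ.length := lt_of_lt_of_le hq hlen
  have hFc : σ.getD p d = σ.getD q d := congrArg Prod.fst hFpq
  have hFw : wt σ (p + 1) = wt σ (q + 1) := congrArg Prod.snd hFpq
  have hgp : σ[p] = σ.getD p d := (List.getD_eq_getElem σ d hpl).symm
  have hgq : σ[q] = σ.getD p d := by
    rw [hFc]; exact (List.getD_eq_getElem σ d hql).symm
  have hA : σ.take (p + 1) = σ.take p ++ [σ.getD p d] := by
    rw [List.take_succ, List.getElem?_eq_getElem hpl, hgp]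
    try rfl
  have hB : σ.take (q + 1)
      = σ.take p ++ [σ.getD p d] ++ (σ.drop (p + 1)).take (q - (p + 1)) ++ [σ.getD p d] := by
    have hq' : q = (p + 1) + (q - (p + 1)) := by omega
    have hq'' : σ.take q = σ.take ((p + 1) + (q - (p + 1))) := by rw [← hq']
    calc σ.take (q + 1) = σ.take q ++ [σ.getD p d] := by
          rw [List.take_succ, List.getElem?_eq_getElem hql, hgq]
          try rfl
      _ = _ := by
          rw [hq'', List.take_add, hA]
  refine ⟨σ.take p, (σ.drop (p + 1)).take (q - (p + 1)), σ.drop (q + 1), σ.getD p d, ?_, ?_⟩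
  · conv_lhs => rw [← List.take_append_drop (q + 1) σ]
    rw [hB]
  · have hpre : pre σ (p + 1) = pre σ (q + 1) :=
      pre_eq_of_wt_eq σ (by omega) hFw
    have e1 : applySeq (σ.take p ++ [σ.getD p d]) root = pre σ (p + 1) := by
      rw [pre, hA]
    have e2 : applySeq (σ.take p ++ [σ.getD p d] ++ (σ.drop (p + 1)).take (q - (p + 1))
        ++ [σ.getD p d]) root = pre σ (q + 1) := by rw [pre, hB]
    rw [e1, e2, hpre]
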